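/- arXiv:2405.15010 — 2 statements merged into one kernel-verified Lean document; each statement's English description precedes it below -/
import Mathlib

section
/- Let f : ℝ^d → ℝ be differentiable, L-smooth with L > 0, and (L0, L1)-smooth with L0 > 0, L1 > 0, and suppose f attains its minimum at x* with f* = f(x*). Let l* ≤ f*, let T ≥ 1, and let x_t ∈ ℝ^d satisfy ‖∇f(x_t)‖ > L0/L1 and f(x_t) > f*. Then the Inexact Polyak Stepsize η_t = (f(x_t) − l*)/(√T · ‖∇f(x_t)‖²) satisfies η_t ≥ 1 / (4 L1 √(2 L T (f(x_t) − f*))). -/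
open Set

lemma line_hasDerivAt {E : Type*} [NormedAddCommGroup E] [InnerProductSpace ℝ E]
    [CompleteSpace E] (f : E → ℝ) (hdiff : Differentiable ℝ f) (x v : E) (t : ℝ) :
    HasDerivAt (fun s : ℝ => f (x + s • v)) (@inner ℝ _ _ (gradient f (x + t • v)) v) t := by
  have h1 : HasDerivAt (fun s : ℝ => x + s • v) v t := by
    simpa using ((hasDerivAt_id t).smul_const v).const_add x
  have h2 := ((hdiff (x + t • v)).hasFDerivAt).comp_hasDerivAt t h1
  have h3 : (fderiv ℝ f (x + t • v)) v = @inner ℝ _ _ (gradient f (x + t • v)) v := by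
    rw [gradient]
    simp
  rw [← h3]
  exact h2

lemma descent_lemma {E : Type*} [NormedAddCommGroup E] [InnerProductSpace ℝ E]
    [CompleteSpace E] (f : E → ℝ) (hdiff : Differentiable ℝ f) (x v : E) (C : ℝ)
    (hb : ∀ t : ℝ, t ∈ Icc (0:ℝ) 1 →
      ‖gradient f (x + t • v) - gradient f x‖ ≤ C * (t * ‖v‖)) :
    f (x + v) ≤ f x + @inner ℝ _ _ (gradient f x) v + C / 2 * ‖v‖ ^ 2 := by
  set ψ : ℝ → ℝ := fun t => f (x + t • v) - t * @inner ℝ _ _ (gradient f x) v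
      - C * t ^ 2 / 2 * ‖v‖ ^ 2 with hψ
  have hD : ∀ t : ℝ, HasDerivAt ψ
      (@inner ℝ _ _ (gradient f (x + t • v)) v - @inner ℝ _ _ (gradient f x) v
        - C * t * ‖v‖ ^ 2) t := by
    intro t
    have h1 := line_hasDerivAt f hdiff x v t
    have h2 : HasDerivAt (fun s : ℝ => s * @inner ℝ _ _ (gradient f x) v)
        (@inner ℝ _ _ (gradient f x) v) t := by
      simpa using (hasDerivAt_id t).mul_const _
    have h3 : HasDerivAt (fun s : ℝ => C * s ^ 2 / 2 * ‖v‖ ^ 2) (C * t * ‖v‖ ^ 2) t := by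
      have := ((hasDerivAt_pow 2 t).const_mul C).div_const 2
      have := this.mul_const (‖v‖ ^ 2)
      refine this.congr_deriv ?_
      ring
    exact (h1.sub h2).sub h3
  have hanti : AntitoneOn ψ (Icc (0:ℝ) 1) := by
    apply antitoneOn_of_deriv_nonpos (convex_Icc 0 1)
    · exact fun t _ => ((hD t).differentiableAt.continuousAt).continuousWithinAt
    · exact fun t _ => ((hD t).differentiableAt).differentiableWithinAt
    · intro t ht
      rw [interior_Icc] at ht
      rw [(hD t).deriv]
      have ht' : t ∈ Icc (0:ℝ) 1 := ⟨le_of_lt ht.1, le_of_lt ht.2⟩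
      have h1 : @inner ℝ _ _ (gradient f (x + t • v)) v - @inner ℝ _ _ (gradient f x) v
          = @inner ℝ _ _ (gradient f (x + t • v) - gradient f x) v := by
        rw [inner_sub_left]
      rw [h1]
      have h2 : @inner ℝ _ _ (gradient f (x + t • v) - gradient f x) v
          ≤ ‖gradient f (x + t • v) - gradient f x‖ * ‖v‖ := real_inner_le_norm _ _
      have h3 := hb t ht'
      nlinarith [norm_nonneg v, mul_le_mul_of_nonneg_right h3 (norm_nonneg v)]
  have key : ψ 1 ≤ ψ 0 := hanti (by norm_num) (by norm_num) (by norm_num)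
  simp only [hψ, one_smul, zero_smul, add_zero, one_pow, zero_pow, one_mul, zero_mul] at key
  nlinarith [key]



/-- In the large-gradient regime `‖∇f(x_t)‖ > L0/L1`, the Inexact Polyak
Stepsize satisfies `η_t ≥ 1/(4L1 √(2LT(f(x_t) − f*)))`. -/
theorem inexact_polyak_stepsize_lower_bound_large_gradient {d : ℕ}
    (f : EuclideanSpace ℝ (Fin d) → ℝ) (L L0 L1 : ℝ)
    (hL : 0 < L) (hL0 : 0 < L0) (hL1 : 0 < L1)
    (hdiff : Differentiable ℝ f)
    (hLsmooth : ∀ x y : EuclideanSpace ℝ (Fin d),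
      ‖gradient f x - gradient f y‖ ≤ L * ‖x - y‖)
    (hsmooth : ∀ x y : EuclideanSpace ℝ (Fin d), ‖x - y‖ ≤ 1 / L1 →
      ‖gradient f x - gradient f y‖ ≤ (L0 + L1 * ‖gradient f x‖) * ‖x - y‖)
    (xstar : EuclideanSpace ℝ (Fin d)) (hmin : ∀ y, f xstar ≤ f y)
    (lstar : ℝ) (hlstar : lstar ≤ f xstar)
    (T : ℕ) (hT : 1 ≤ T)
    (xt : EuclideanSpace ℝ (Fin d))
    (hlarge : ‖gradient f xt‖ > L0 / L1)
    (hgt : f xt > f xstar)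
    (η : ℝ) (hη : η = (f xt - lstar) / (Real.sqrt T * ‖gradient f xt‖ ^ 2)) :
    η ≥ 1 / (4 * L1 * Real.sqrt (2 * L * T * (f xt - f xstar))) := by
  set g := gradient f xt with hg
  set G := ‖g‖ with hG
  set Δ := f xt - f xstar with hΔ
  have hΔpos : 0 < Δ := sub_pos.mpr hgt
  have hGpos : 0 < G := lt_trans (div_pos hL0 hL1) hlarge
  -- Step A : G^2 ≤ 2 L Δ
  have stepA : G ^ 2 ≤ 2 * L * Δ := by
    have hd := descent_lemma f hdiff xt (-(1/L) • g) L (fun t ht => by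
      calc ‖gradient f (xt + t • (-(1/L) • g)) - gradient f xt‖
          ≤ L * ‖(xt + t • (-(1/L) • g)) - xt‖ := hLsmooth _ _
        _ = L * (t * ‖-(1/L) • g‖) := by
            rw [add_sub_cancel_left, norm_smul, Real.norm_eq_abs, abs_of_nonneg ht.1])
    have hstar := hmin (xt + -(1/L) • g)
    have hin : @inner ℝ _ _ g (-(1/L) • g) = -(1/L) * G ^ 2 := by
      rw [real_inner_smul_right, real_inner_self_eq_norm_sq]
    have hnv : ‖-(1/L) • g‖ ^ 2 = (1/L)^2 * G ^ 2 := by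
      rw [norm_smul, mul_pow, Real.norm_eq_abs, sq_abs]
      simp only [← hG]
      ring
    rw [hin, hnv] at hd
    have hcomb : f xstar ≤ f xt + (-(1/L) * G ^ 2 + L / 2 * ((1/L)^2 * G ^ 2)) := by
      linarith [le_trans hstar hd]
    have hsimp : -(1/L) * G ^ 2 + L / 2 * ((1/L)^2 * G ^ 2) = -(1/(2*L)) * G ^ 2 := by
      field_simp
      ring
    rw [hsimp] at hcomb
    have h1 : (1/(2*L)) * G ^ 2 ≤ Δ := by linarith
    have := mul_le_mul_of_nonneg_left h1 (by positivity : (0:ℝ) ≤ 2*L)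
    calc G ^ 2 = 2 * L * ((1/(2*L)) * G ^ 2) := by field_simp
      _ ≤ 2 * L * Δ := this
  -- Step B : G / (4 L1) ≤ Δ
  have stepB : G / (4 * L1) ≤ Δ := by
    set v : EuclideanSpace ℝ (Fin d) := -(1/(2*L1*G)) • g with hv
    have hnv : ‖v‖ = 1/(2*L1) := by
      rw [hv, norm_smul, Real.norm_eq_abs, abs_neg, abs_of_nonneg (by positivity)]
      simp only [← hG]
      field_simp
    have hL0G : L0 ≤ L1 * G := by
      have := (div_lt_iff₀ hL1).mp hlarge
      linarith
    have hd := descent_lemma f hdiff xt v (2*L1*G) (fun t ht => by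
      have hdist : ‖xt - (xt + t • v)‖ ≤ 1 / L1 := by
        rw [show xt - (xt + t • v) = -(t • v) by abel, norm_neg, norm_smul,
          Real.norm_eq_abs, abs_of_nonneg ht.1, hnv]
        have e1 : t * (1/(2*L1)) ≤ 1 * (1/(2*L1)) :=
          mul_le_mul_of_nonneg_right ht.2 (by positivity)
        have e2 : 1/(2*L1) ≤ 1/L1 := by
          rw [div_le_div_iff₀ (by positivity) hL1]
          nlinarith
        linarith
      have h1 := hsmooth xt (xt + t • v) hdist
      rw [norm_sub_rev] at h1
      calc ‖gradient f (xt + t • v) - gradient f xt‖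
          ≤ (L0 + L1 * G) * ‖xt - (xt + t • v)‖ := h1
        _ = (L0 + L1 * G) * (t * ‖v‖) := by
            rw [show xt - (xt + t • v) = -(t • v) by abel, norm_neg, norm_smul,
              Real.norm_eq_abs, abs_of_nonneg ht.1]
        _ ≤ 2*L1*G * (t * ‖v‖) :=
            mul_le_mul_of_nonneg_right (by linarith) (mul_nonneg ht.1 (norm_nonneg _)))
    have hstar := hmin (xt + v)
    have hin : @inner ℝ _ _ g v = -(1/(2*L1*G)) * G ^ 2 := by
      rw [hv, real_inner_smul_right, real_inner_self_eq_norm_sq]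
    rw [hin, hnv] at hd
    have h2 : -(1/(2*L1*G)) * G ^ 2 + 2*L1*G / 2 * (1/(2*L1)) ^ 2 = -(G/(4*L1)) := by
      field_simp
      ring
    linarith [le_trans hstar hd]
  -- Combine
  have hsT : (1:ℝ) ≤ Real.sqrt T := by
    rw [show (1:ℝ) = Real.sqrt 1 by simp]
    exact Real.sqrt_le_sqrt (by exact_mod_cast hT)
  have hsTpos : 0 < Real.sqrt T := lt_of_lt_of_le one_pos hsT
  have hGle : G ≤ Real.sqrt (2 * L * Δ) := by
    rw [show G = Real.sqrt (G^2) by rw [Real.sqrt_sq hGpos.le]]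
    exact Real.sqrt_le_sqrt stepA
  have hsplit : Real.sqrt (2 * L * (T:ℝ) * Δ) = Real.sqrt T * Real.sqrt (2 * L * Δ) := by
    rw [← Real.sqrt_mul (Nat.cast_nonneg T)]
    congr 1
    ring
  have hsq : 0 < Real.sqrt (2 * L * Δ) := Real.sqrt_pos.mpr (by positivity)
  have h1 : Δ / (Real.sqrt T * G ^ 2) ≤ η := by
    rw [hη]
    gcongr
    linarith
  have heq : (G/(4*L1))/(Real.sqrt T * G^2) = 1/(4*L1*Real.sqrt T*G) := by
    field_simp
  have h2 : 1/(4*L1*Real.sqrt T*G) ≤ Δ / (Real.sqrt T * G ^ 2) := by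
    rw [← heq]
    gcongr
  have hden : 4*L1*Real.sqrt T*G ≤ 4 * L1 * Real.sqrt (2 * L * (T:ℝ) * Δ) := by
    rw [hsplit]
    nlinarith [mul_le_mul_of_nonneg_left hGle (by positivity : (0:ℝ) ≤ 4*L1*Real.sqrt T)]
  have h3 : 1 / (4 * L1 * Real.sqrt (2 * L * (T:ℝ) * Δ)) ≤ 1/(4*L1*Real.sqrt T*G) :=
    one_div_le_one_div_of_le (by positivity) hden
  linarith
end

section
/- Let f : ℝ^d → ℝ be differentiable, convex, L-smooth with L > 0, and (L0, L1)-smooth with L0 > 0, L1 > 0, and suppose f attains its minimum at x* with f* = f(x*). Let l* ≤ f*, σ² = f* − l*, T ≥ 1, and let the sequence (x_t)_{t=0,...,T} be generated by x_{t+1} = x_t − η_t ∇f(x_t) with η_t = (f(x_t) − l*)/(√T · ‖∇f(x_t)‖²) (where ∇f(x_t) ≠ 0 for all t < T). Then min_{0 ≤ t ≤ T−1} f(x_t) − f* ≤ (8 L0 ‖x_0 − x*‖² + 2σ²)/√T + 128 L1² L ‖x_0 − x*‖⁴ / T + 8 L1² σ⁴ L / (L0² T). -/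
open InnerProductSpace Filter Topology

section helpers
variable {d : ℕ}

lemma dir_deriv (f : EuclideanSpace ℝ (Fin d) → ℝ) (hdiff : Differentiable ℝ f)
    (x v : EuclideanSpace ℝ (Fin d)) (t : ℝ) :
    HasDerivAt (fun s : ℝ => f (x + s • v)) ⟪gradient f (x + t • v), v⟫_ℝ t := by
  have h1 : HasDerivAt (fun s : ℝ => x + s • v) v t := by
    simpa using ((hasDerivAt_id t).smul_const v).const_add x
  have h2 : HasFDerivAt f (toDual ℝ _ (gradient f (x + t • v))) (x + t • v) :=
    (hdiff (x + t • v)).hasGradientAt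
  have h3 := h2.comp_hasDerivAt t h1
  rw [toDual_apply_apply] at h3
  exact h3

lemma grad_convex (f : EuclideanSpace ℝ (Fin d) → ℝ) (hdiff : Differentiable ℝ f)
    (hconv : ConvexOn ℝ Set.univ f) (x y : EuclideanSpace ℝ (Fin d)) :
    f x + ⟪gradient f x, y - x⟫_ℝ ≤ f y := by
  set φ : ℝ → ℝ := fun s => f (x + s • (y - x)) with hφ
  have hd : HasDerivAt φ ⟪gradient f x, y - x⟫_ℝ 0 := by
    simpa using dir_deriv f hdiff x (y - x) 0
  have hslope : ∀ s ∈ Set.Ioc (0:ℝ) 1, slope φ 0 s ≤ f y - f x := by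
    intro s hs
    have h1 : φ s ≤ (1 - s) * f x + s * f y := by
      have := hconv.2 (Set.mem_univ x) (Set.mem_univ y)
        (by linarith [hs.1, hs.2] : (0:ℝ) ≤ 1 - s) (le_of_lt hs.1) (by ring)
      have hxy : (1 - s) • x + s • y = x + s • (y - x) := by module
      rw [hxy] at this
      simpa [hφ, smul_eq_mul] using this
    have h0 : φ 0 = f x := by simp [hφ]
    rw [slope_def_field, h0, div_le_iff₀ (by simpa using hs.1)]
    nlinarith [hs.1, hs.2]
  have htend : Tendsto (slope φ 0) (𝓝[>] 0) (𝓝 ⟪gradient f x, y - x⟫_ℝ) :=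
    (hasDerivAt_iff_tendsto_slope.mp hd).mono_left
      (nhdsWithin_mono 0 (fun s hs => ne_of_gt hs))
  have : ⟪gradient f x, y - x⟫_ℝ ≤ f y - f x := by
    refine le_of_tendsto htend ?_
    filter_upwards [Ioc_mem_nhdsGT_of_mem (by norm_num : (0:ℝ) ∈ Set.Ico (0:ℝ) 1)] with s hs
    exact hslope s hs
  linarith

lemma descent_lemma_s10 (f : EuclideanSpace ℝ (Fin d) → ℝ) (hdiff : Differentiable ℝ f)
    (x v : EuclideanSpace ℝ (Fin d)) (M : ℝ)
    (hM : ∀ t ∈ Set.Icc (0:ℝ) 1,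
      ‖gradient f (x + t • v) - gradient f x‖ ≤ M * (t * ‖v‖)) :
    f (x + v) ≤ f x + ⟪gradient f x, v⟫_ℝ + M / 2 * ‖v‖ ^ 2 := by
  set c : ℝ := ⟪gradient f x, v⟫_ℝ with hc
  set ψ : ℝ → ℝ := fun t => f (x + t • v) - t * c - M * t ^ 2 * ‖v‖ ^ 2 / 2 with hψ
  have hψd : ∀ t : ℝ, HasDerivAt ψ
      (⟪gradient f (x + t • v), v⟫_ℝ - c - M * t * ‖v‖ ^ 2) t := by
    intro t
    have h1 := dir_deriv f hdiff x v t
    have h2 : HasDerivAt (fun t : ℝ => t * c) c t := by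
      simpa using (hasDerivAt_id t).mul_const c
    have h3 : HasDerivAt (fun t : ℝ => M * t ^ 2 * ‖v‖ ^ 2 / 2)
        (M * t * ‖v‖ ^ 2) t := by
      have : HasDerivAt (fun t : ℝ => t ^ 2) (2 * t) t := by
        simpa using hasDerivAt_pow 2 t
      have := ((this.const_mul M).mul_const (‖v‖ ^ 2)).div_const 2
      rw [show M * t * ‖v‖ ^ 2 = M * (2 * t) * ‖v‖ ^ 2 / 2 by ring]; exact this
    exact (h1.sub h2).sub h3
  have hanti : AntitoneOn ψ (Set.Icc 0 1) := by
    refine antitoneOn_of_deriv_nonpos (convex_Icc 0 1)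
      (fun t _ => ((hψd t).differentiableAt).continuousAt.continuousWithinAt)
      (fun t _ => ((hψd t).differentiableAt).differentiableWithinAt) ?_
    intro t ht
    rw [interior_Icc] at ht
    rw [(hψd t).deriv]
    have h4 : ⟪gradient f (x + t • v) - gradient f x, v⟫_ℝ ≤ M * (t * ‖v‖) * ‖v‖ :=
      le_trans (real_inner_le_norm _ _)
        (mul_le_mul_of_nonneg_right (hM t ⟨le_of_lt ht.1, le_of_lt ht.2⟩) (norm_nonneg v))
    rw [inner_sub_left] at h4
    nlinarith [h4]
  have := hanti (Set.left_mem_Icc.mpr one_pos.le) (Set.right_mem_Icc.mpr one_pos.le) one_pos.le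
  simp only [hψ] at this
  norm_num at this
  nlinarith [this]

lemma grad_bound (f : EuclideanSpace ℝ (Fin d) → ℝ) (hdiff : Differentiable ℝ f)
    (x xstar : EuclideanSpace ℝ (Fin d))
    (hmin : ∀ y, f xstar ≤ f y) (M : ℝ) (hM : 0 < M)
    (h : ∀ t ∈ Set.Icc (0:ℝ) 1,
      ‖gradient f (x + t • (-(M⁻¹) • gradient f x)) - gradient f x‖
        ≤ M * (t * ‖-(M⁻¹) • gradient f x‖)) :
    ‖gradient f x‖ ^ 2 ≤ 2 * M * (f x - f xstar) := by
  set g := gradient f x with hg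
  set v : EuclideanSpace ℝ (Fin d) := -(M⁻¹) • g with hv
  have hd := descent_lemma_s10 f hdiff x v M h
  have h1 : ⟪g, v⟫_ℝ = -(M⁻¹) * ‖g‖ ^ 2 := by
    rw [hv, real_inner_smul_right, real_inner_self_eq_norm_sq]
  have h2 : ‖v‖ ^ 2 = M⁻¹ ^ 2 * ‖g‖ ^ 2 := by
    rw [hv, norm_smul]
    rw [show ‖(-M⁻¹ : ℝ)‖ = M⁻¹ by
      rw [norm_neg, Real.norm_eq_abs, abs_of_pos (inv_pos.mpr hM)]]
    ring
  have h3 := hmin (x + v)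
  rw [h1, h2] at hd
  have hM' : M ≠ 0 := ne_of_gt hM
  have : f xstar ≤ f x - M⁻¹ / 2 * ‖g‖ ^ 2 := by
    refine le_trans h3 (le_trans hd (le_of_eq ?_))
    field_simp; ring
  have := mul_le_mul_of_nonneg_left (by linarith : M⁻¹ / 2 * ‖g‖ ^ 2 ≤ f x - f xstar)
    (le_of_lt (mul_pos two_pos hM))
  calc ‖g‖ ^ 2 = 2 * M * (M⁻¹ / 2 * ‖g‖ ^ 2) := by field_simp
    _ ≤ 2 * M * (f x - f xstar) := this

end helpers

set_option maxHeartbeats 1000000 in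
/-- Convergence of Inexact Polyak Stepsize:
`min_{0≤t≤T−1} f(x_t) − f* ≤ (8L0‖x_0 − x*‖² + 2σ²)/√T + 128L1²L‖x_0 − x*‖⁴/T
  + 8L1²σ⁴L/(L0²T)`. -/
theorem inexact_polyak_convergence {d : ℕ}
    (f : EuclideanSpace ℝ (Fin d) → ℝ) (L L0 L1 : ℝ)
    (hL : 0 < L) (hL0 : 0 < L0) (hL1 : 0 < L1)
    (hdiff : Differentiable ℝ f)
    (hconv : ConvexOn ℝ Set.univ f)
    (hLsmooth : ∀ x y : EuclideanSpace ℝ (Fin d),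
      ‖gradient f x - gradient f y‖ ≤ L * ‖x - y‖)
    (hsmooth : ∀ x y : EuclideanSpace ℝ (Fin d), ‖x - y‖ ≤ 1 / L1 →
      ‖gradient f x - gradient f y‖ ≤ (L0 + L1 * ‖gradient f x‖) * ‖x - y‖)
    (xstar : EuclideanSpace ℝ (Fin d)) (hmin : ∀ y, f xstar ≤ f y)
    (lstar : ℝ) (hlstar : lstar ≤ f xstar)
    (σ2 : ℝ) (hσ2 : σ2 = f xstar - lstar)
    (T : ℕ) (hT : 1 ≤ T)
    (x : ℕ → EuclideanSpace ℝ (Fin d))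
    (hgrad : ∀ t < T, gradient f (x t) ≠ 0)
    (hstep : ∀ t < T, x (t + 1) = x t -
      ((f (x t) - lstar) / (Real.sqrt T * ‖gradient f (x t)‖ ^ 2)) • gradient f (x t)) :
    (Finset.range T).inf' (Finset.nonempty_range_iff.mpr (by omega))
        (fun t => f (x t) - f xstar) ≤
      (8 * L0 * ‖x 0 - xstar‖ ^ 2 + 2 * σ2) / Real.sqrt T +
        128 * L1 ^ 2 * L * ‖x 0 - xstar‖ ^ 4 / T +
        8 * L1 ^ 2 * σ2 ^ 2 * L / (L0 ^ 2 * T) := by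
  set D : ℝ := ‖x 0 - xstar‖ with hD
  set r : ℝ := Real.sqrt T with hr
  set ε : ℝ := (Finset.range T).inf' (Finset.nonempty_range_iff.mpr (by omega))
      (fun t => f (x t) - f xstar) with hε
  have hTpos : (0:ℝ) < T := by exact_mod_cast Nat.pos_of_ne_zero (by omega)
  have hT1 : (1:ℝ) ≤ T := by exact_mod_cast hT
  have hr2 : r ^ 2 = T := Real.sq_sqrt (le_of_lt hTpos)
  have hrpos : 0 < r := Real.sqrt_pos.mpr hTpos
  have hr1 : 1 ≤ r := by nlinarith [hr2, hrpos]
  have hσ2nn : 0 ≤ σ2 := by rw [hσ2]; linarith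
  have hDnn : 0 ≤ D := norm_nonneg _
  -- the target bound is at least (8 L0 D^2 + 2 σ2)/r
  have hBge : (8 * L0 * D ^ 2 + 2 * σ2) / r ≤
      (8 * L0 * D ^ 2 + 2 * σ2) / r + 128 * L1 ^ 2 * L * D ^ 4 / ↑T +
        8 * L1 ^ 2 * σ2 ^ 2 * L / (L0 ^ 2 * ↑T) := by
    have h1 : 0 ≤ 128 * L1 ^ 2 * L * D ^ 4 / (T:ℝ) := by positivity
    have h2 : 0 ≤ 8 * L1 ^ 2 * σ2 ^ 2 * L / (L0 ^ 2 * (T:ℝ)) := by positivity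
    linarith
  have hεle : ∀ t < T, ε ≤ f (x t) - f xstar := by
    intro t ht
    exact Finset.inf'_le _ (Finset.mem_range.mpr ht)
  by_cases hcase : ε ≤ 2 * σ2 / r
  · refine le_trans hcase (le_trans ?_ hBge)
    have h8 : 0 ≤ 8 * L0 * D ^ 2 := by positivity
    rw [div_le_div_iff₀ hrpos hrpos]
    nlinarith
  push_neg at hcase
  have hεpos : 0 < ε := lt_of_le_of_lt (by positivity) hcase
  have hσε : 2 * σ2 < ε * r := by
    rw [div_lt_iff₀ hrpos] at hcase; linarith
  set sε : ℝ := Real.sqrt ε with hsε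
  have hsε2 : sε ^ 2 = ε := Real.sq_sqrt (le_of_lt hεpos)
  have hsεpos : 0 < sε := Real.sqrt_pos.mpr hεpos
  set sL : ℝ := Real.sqrt (2 * L) with hsL
  have hsL2 : sL ^ 2 = 2 * L := Real.sq_sqrt (by linarith)
  have hsLpos : 0 < sL := Real.sqrt_pos.mpr (by linarith)
  set A : ℝ := L0 + sL * L1 * sε with hA
  have hApos : 0 < A := by positivity
  set c : ℝ := ε / (4 * r * A) with hc
  have hcpos : 0 < c := by positivity
  -- per-step decrease
  have hstep2 : ∀ t < T, ‖x (t+1) - xstar‖ ^ 2 ≤ ‖x t - xstar‖ ^ 2 - c := by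
    intro t ht
    set g := gradient f (x t) with hg
    set n : ℝ := ‖g‖ with hn
    set q : ℝ := n ^ 2 with hq
    set Δ : ℝ := f (x t) - f xstar with hΔ
    have hΔε : ε ≤ Δ := hεle t ht
    have hΔpos : 0 < Δ := lt_of_lt_of_le hεpos hΔε
    have hnpos : 0 < n := norm_pos_iff.mpr (hgrad t ht)
    have hqpos : 0 < q := by positivity
    set h : ℝ := f (x t) - lstar with hh
    have hhΔ : h = Δ + σ2 := by rw [hh, hΔ, hσ2]; ring
    have hhpos : 0 < h := by rw [hhΔ]; linarith
    set η : ℝ := h / (r * q) with hη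
    have hηpos : 0 < η := by positivity
    clear_value g n q Δ h η
    -- gradient bounds
    have hF2 : q ≤ 2 * L * Δ := by
      rw [hq, hn, hg, hΔ]
      apply grad_bound f hdiff (x t) xstar hmin L hL
      intro s hs
      have := hLsmooth (x t + s • (-(L⁻¹) • gradient f (x t))) (x t)
      calc ‖gradient f (x t + s • (-L⁻¹ • gradient f (x t))) - gradient f (x t)‖
          ≤ L * ‖x t + s • (-L⁻¹ • gradient f (x t)) - x t‖ := by
            simpa using this
        _ = L * (s * ‖(-L⁻¹ : ℝ) • gradient f (x t)‖) := by
            rw [add_sub_cancel_left, norm_smul, Real.norm_eq_abs, abs_of_nonneg hs.1]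
        _ = L * (s * ‖-L⁻¹ • gradient f (x t)‖) := rfl
    have hM1pos : 0 < L0 + L1 * n := by positivity
    have hF3 : q ≤ 2 * (L0 + L1 * n) * Δ := by
      rw [hq, hn, hg, hΔ]
      have hgoal : ‖gradient f (x t)‖ ^ 2
          ≤ 2 * (L0 + L1 * n) * (f (x t) - f xstar) := by
        apply grad_bound f hdiff (x t) xstar hmin (L0 + L1 * n) hM1pos
        intro s hs
        have hnv : ‖x t + s • (-(L0 + L1 * n)⁻¹ • gradient f (x t)) - x t‖
            = s * ((L0 + L1 * n)⁻¹ * n) := by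
          rw [add_sub_cancel_left, norm_smul, norm_smul, Real.norm_eq_abs,
            Real.norm_eq_abs, abs_of_nonneg hs.1, abs_neg,
            abs_of_pos (inv_pos.mpr hM1pos), hn, hg]
        have hdist : ‖x t - (x t + s • (-(L0 + L1 * n)⁻¹ • gradient f (x t)))‖ ≤ 1 / L1 := by
          rw [norm_sub_rev, hnv]
          rw [div_eq_inv_mul, mul_one]  -- 1/L1 = L1⁻¹
          have h1 : (L0 + L1 * n)⁻¹ * n ≤ L1⁻¹ := by
            rw [inv_mul_eq_div, div_le_iff₀ hM1pos]
            rw [mul_add, inv_mul_cancel_left₀ (ne_of_gt hL1)]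
            have hipos : 0 < L1⁻¹ := inv_pos.mpr hL1
            linarith [mul_nonneg hipos.le hL0.le]
          calc s * ((L0 + L1 * n)⁻¹ * n) ≤ 1 * ((L0 + L1 * n)⁻¹ * n) := by
                apply mul_le_mul_of_nonneg_right hs.2; positivity
            _ = (L0 + L1 * n)⁻¹ * n := one_mul _
            _ ≤ L1⁻¹ := h1
        have := hsmooth (x t) (x t + s • (-(L0 + L1 * n)⁻¹ • gradient f (x t))) hdist
        rw [norm_sub_rev (gradient f (x t)), norm_sub_rev (x t)] at this
        calc ‖gradient f (x t + s • (-(L0 + L1 * n)⁻¹ • gradient f (x t))) - gradient f (x t)‖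
            ≤ (L0 + L1 * ‖gradient f (x t)‖) *
                ‖x t + s • (-(L0 + L1 * n)⁻¹ • gradient f (x t)) - x t‖ := this
          _ = (L0 + L1 * n) * (s * ‖(-(L0 + L1 * n)⁻¹ : ℝ) • gradient f (x t)‖) := by
              rw [hnv, norm_smul, Real.norm_eq_abs, abs_neg, abs_of_pos (inv_pos.mpr hM1pos)]
              rw [← hg, ← hn]
          _ = (L0 + L1 * n) * (s * ‖-(L0 + L1 * n)⁻¹ • gradient f (x t)‖) := rfl
      rw [hn, hg] at hgoal
      exact hgoal
    -- convexity bound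
    have hF1 : Δ ≤ ⟪g, x t - xstar⟫_ℝ := by
      have := grad_convex f hdiff hconv (x t) xstar
      have h2 : ⟪g, xstar - x t⟫_ℝ = -⟪g, x t - xstar⟫_ℝ := by
        rw [← inner_neg_right]; congr 1; abel
      rw [hg] at h2 ⊢
      rw [h2] at this
      linarith [this]
    -- norm expansion
    have e0 : x (t + 1) - xstar = (x t - xstar) - η • g := by
      rw [hstep t ht, hη, hh, hq, hn, hg]; abel
    have hexp : ‖x (t+1) - xstar‖ ^ 2 = ‖x t - xstar‖ ^ 2
        - 2 * η * ⟪g, x t - xstar⟫_ℝ + η ^ 2 * q := by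
      rw [e0, @norm_sub_sq_real, real_inner_smul_right, norm_smul,
        real_inner_comm, Real.norm_eq_abs, hq, hn]
      rw [mul_pow, sq_abs]
      ring
    -- key numeric bound
    set sΔ : ℝ := Real.sqrt Δ with hsΔ
    have hsΔ2 : sΔ ^ 2 = Δ := Real.sq_sqrt hΔpos.le
    have hsΔpos : 0 < sΔ := Real.sqrt_pos.mpr hΔpos
    have hsεΔ : sε ≤ sΔ := Real.sqrt_le_sqrt hΔε
    set At : ℝ := L0 + sL * L1 * sΔ with hAt
    have hAtpos : 0 < At := by positivity
    have hnn : n ≤ sL * sΔ := by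
      have h2 : n ^ 2 ≤ (sL * sΔ) ^ 2 := by
        rw [mul_pow, hsL2, hsΔ2]; rw [hq] at hF2; linarith
      exact le_of_pow_le_pow_left₀ two_ne_zero (by positivity) h2
    have hq2 : q ≤ 2 * Δ * At := by
      have h9 : L0 + L1 * n ≤ L0 + L1 * (sL * sΔ) := by
        linarith [mul_le_mul_of_nonneg_left hnn hL1.le]
      have h10 := mul_le_mul_of_nonneg_right h9 hΔpos.le
      rw [hAt]
      calc q ≤ 2 * (L0 + L1 * n) * Δ := hF3
        _ = 2 * ((L0 + L1 * n) * Δ) := by ring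
        _ ≤ 2 * ((L0 + L1 * (sL * sΔ)) * Δ) := by linarith
        _ = 2 * Δ * (L0 + sL * L1 * sΔ) := by ring
    have hhub : h ≤ 3 / 2 * (Δ * r) := by
      have p1 : Δ ≤ Δ * r := by
        linarith [mul_le_mul_of_nonneg_left hr1 hΔpos.le]
      have p2 : ε * r ≤ Δ * r := mul_le_mul_of_nonneg_right hΔε hrpos.le
      rw [hhΔ]; linarith
    have hbr : Δ * r / 2 ≤ 2 * Δ * r - h := by linarith
    have hΔh : Δ ≤ h := by rw [hhΔ]; linarith
    have m1 : ε * At ≤ Δ * A := by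
      rw [hA, hAt, ← hsε2, ← hsΔ2]
      have key : 0 ≤ (sΔ - sε) * (L0 * (sΔ + sε) + sL * L1 * (sΔ * sε)) :=
        mul_nonneg (sub_nonneg.mpr hsεΔ) (by positivity)
      linarith [key]
    have e1 : 2 * η * Δ - η ^ 2 * q = h * (2 * Δ * r - h) / (r ^ 2 * q) := by
      rw [hη]; field_simp
    have hkey : c ≤ 2 * η * Δ - η ^ 2 * q := by
      rw [e1, hc, div_le_div_iff₀ (by positivity) (by positivity)]
      have a1 : ε * r ^ 2 * q ≤ ε * r ^ 2 * (2 * Δ * At) :=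
        mul_le_mul_of_nonneg_left hq2 (by positivity)
      have a2 : 2 * r ^ 2 * Δ * (ε * At) ≤ 2 * r ^ 2 * Δ * (Δ * A) :=
        mul_le_mul_of_nonneg_left m1 (by positivity)
      have b1 : Δ * (Δ * r / 2) ≤ h * (2 * Δ * r - h) :=
        mul_le_mul hΔh hbr (by positivity) hhpos.le
      have b2 : Δ * (Δ * r / 2) * (4 * r * A) ≤ h * (2 * Δ * r - h) * (4 * r * A) :=
        mul_le_mul_of_nonneg_right b1 (by positivity)
      calc ε * (r ^ 2 * q) = ε * r ^ 2 * q := by ring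
        _ ≤ ε * r ^ 2 * (2 * Δ * At) := a1
        _ = 2 * r ^ 2 * Δ * (ε * At) := by ring
        _ ≤ 2 * r ^ 2 * Δ * (Δ * A) := a2
        _ = Δ * (Δ * r / 2) * (4 * r * A) := by ring
        _ ≤ h * (2 * Δ * r - h) * (4 * r * A) := b2
    have hin : 2 * η * Δ ≤ 2 * η * ⟪g, x t - xstar⟫_ℝ := by
      have := mul_le_mul_of_nonneg_left hF1 (by positivity : (0:ℝ) ≤ 2 * η)
      linarith
    linarith [hexp, hin, hkey]
  -- iterate
  have hiter : ∀ t, t ≤ T → ‖x t - xstar‖ ^ 2 ≤ D ^ 2 - t * c := by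
    intro t
    induction t with
    | zero => intro _; simp [hD]
    | succ n ih =>
      intro hn1
      have hnT : n < T := hn1
      have h1 := hstep2 n hnT
      have h2 := ih (le_of_lt hnT)
      push_cast
      linarith
  have hfin := hiter T le_rfl
  have h0 : (0:ℝ) ≤ ‖x T - xstar‖ ^ 2 := by positivity
  have hTc : (T:ℝ) * c ≤ D ^ 2 := by linarith
  have h5 : r * ε ≤ 4 * A * D ^ 2 := by
    rw [hc, ← hr2] at hTc
    have e2 : r ^ 2 * (ε / (4 * r * A)) = r * ε / (4 * A) := by
      field_simp
    rw [e2, div_le_iff₀ (by positivity)] at hTc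
    linarith
  by_cases hca : sL * L1 * sε ≤ L0
  · -- small-gradient regime
    have h6 : r * ε ≤ 8 * L0 * D ^ 2 := by
      have hAl : A ≤ 2 * L0 := by rw [hA]; linarith
      have := mul_le_mul_of_nonneg_right hAl (sq_nonneg D)
      linarith [h5]
    have h7 : ε ≤ (8 * L0 * D ^ 2 + 2 * σ2) / r := by
      rw [le_div_iff₀ hrpos]
      linarith [h6]
    exact le_trans h7 hBge
  · push_neg at hca
    have h6 : r * ε ≤ 8 * (sL * L1 * sε) * D ^ 2 := by
      have hAl : A ≤ 2 * (sL * L1 * sε) := by rw [hA]; linarith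
      have := mul_le_mul_of_nonneg_right hAl (sq_nonneg D)
      linarith [h5]
    have h7 : r * sε ≤ 8 * sL * L1 * D ^ 2 := by
      have : r * sε * sε ≤ 8 * sL * L1 * D ^ 2 * sε := by
        rw [← hsε2] at h6; linear_combination h6
      exact le_of_mul_le_mul_right (by linarith) hsεpos
    have h8 : (T:ℝ) * ε ≤ 128 * L1 ^ 2 * L * D ^ 4 := by
      have hsq : (r * sε) ^ 2 ≤ (8 * sL * L1 * D ^ 2) ^ 2 :=
        pow_le_pow_left₀ (by positivity) h7 2
      calc (T:ℝ) * ε = (r * sε) ^ 2 := by rw [mul_pow, hr2, hsε2]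
        _ ≤ (8 * sL * L1 * D ^ 2) ^ 2 := hsq
        _ = 128 * L1 ^ 2 * L * D ^ 4 := by
            rw [mul_pow, mul_pow, mul_pow, hsL2]; ring
    have h9 : ε ≤ 128 * L1 ^ 2 * L * D ^ 4 / T := by
      rw [le_div_iff₀ hTpos]; linarith
    have h10 : 0 ≤ (8 * L0 * D ^ 2 + 2 * σ2) / r := by positivity
    have h11 : 0 ≤ 8 * L1 ^ 2 * σ2 ^ 2 * L / (L0 ^ 2 * (T:ℝ)) := by positivity
    linarith
end
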